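/- Let V : ℝ → ℝ be any function, ρ_j > 0, and ε ≥ 0. Then sup{ρ·V((1+ε)ρ) : ρ ∈ [0, ρ_j/(1+ε)]} = (1/(1+ε))·sup{r·V(r) : r ∈ [0, ρ_j]}. In particular, the capacity of a road with lane-changing intensity ε equals 1/(1+ε) times the capacity without lane changes, a capacity reduction by the factor 1 − 1/(1+ε). -/

import Mathlib

open scoped Pointwise


/-- For any speed-density function `V`, jam density `ρ_j > 0` and lane-changing intensity
`ε ≥ 0`, the capacity with lane-changing, `sup {ρ·V((1+ε)ρ) : ρ ∈ [0, ρ_j/(1+ε)]}`, equals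
`1/(1+ε)` times the capacity without lane changes, `sup {r·V(r) : r ∈ [0, ρ_j]}`. -/
theorem capacity_reduction
    (V : ℝ → ℝ) (ρ_j : ℝ) (hρj : 0 < ρ_j) (ε : ℝ) (hε : 0 ≤ ε) :
    sSup ((fun ρ : ℝ => ρ * V ((1 + ε) * ρ)) '' Set.Icc 0 (ρ_j / (1 + ε))) =
      (1 / (1 + ε)) * sSup ((fun r : ℝ => r * V r) '' Set.Icc 0 ρ_j) := by
  have hc : (0:ℝ) < 1 + ε := by linarith
  have hset : ((fun ρ : ℝ => ρ * V ((1 + ε) * ρ)) '' Set.Icc 0 (ρ_j / (1 + ε))) =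
      (1 / (1 + ε)) • ((fun r : ℝ => r * V r) '' Set.Icc 0 ρ_j) := by
    ext x
    constructor
    · rintro ⟨ρ, ⟨h0, h1⟩, rfl⟩
      refine ⟨(1 + ε) * ρ * V ((1 + ε) * ρ), ⟨(1 + ε) * ρ, ⟨by positivity,
        by rw [mul_comm]; exact (le_div_iff₀ hc).mp h1⟩, rfl⟩, ?_⟩
      simp [smul_eq_mul]
      field_simp
    · rintro ⟨y, ⟨r, ⟨h0, h1⟩, rfl⟩, rfl⟩
      refine ⟨r / (1 + ε), ⟨by positivity, by exact div_le_div_of_nonneg_right h1 hc.le⟩, ?_⟩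
      simp [smul_eq_mul]
      rw [mul_div_cancel₀ _ hc.ne']
      ring
  rw [hset, Real.sSup_smul_of_nonneg (by positivity), smul_eq_mul]
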